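/- Let E ∈ ℝ with |D(E)| > 2, let λ₁ be the eigenvalue of M(E) with |λ₁| < 1 (which exists and is real since det M(E) = 1), and let V₁ ∈ ℝ² be an eigenvector of M(E) for λ₁. Suppose V : ℝ → ℝ² is differentiable with V'(x) = A_E(x)·V(x) for all x and V(0) ≠ 0. Then: (i) if V(0) is a scalar multiple of V₁, then ‖V(x)‖ → 0 as x → +∞ and ‖V(x)‖ → +∞ as x → −∞; (ii) if V(0) is not a scalar multiple of V₁, then ‖V(x)‖ → +∞ as x → +∞. -/

import Mathlib

open Matrix Filter Set

private lemma bdd_of_periodic {f : ℝ → ℝ} (hc : Continuous f)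
    (hp : ∀ x, f (x + 1) = f x) : ∃ B : ℝ, 0 ≤ B ∧ ∀ x, |f x| ≤ B := by
  obtain ⟨C, hC⟩ := (isCompact_Icc (a := (0:ℝ)) (b := 1)).exists_bound_of_continuousOn
    hc.continuousOn
  refine ⟨max C 0, le_max_right _ _, fun x => ?_⟩
  have hper : Function.Periodic f 1 := hp
  have h1 : f (x - (⌊x⌋ : ℝ) * 1) = f x := hper.sub_int_mul_eq ⌊x⌋
  have h2 : f x = f (Int.fract x) := by
    rw [← h1]; congr 1; rw [mul_one]; rfl
  rw [h2]
  exact le_max_of_le_left (hC _ ⟨Int.fract_nonneg x, (Int.fract_lt_one x).le⟩)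

private lemma mulVec_norm_le {A : Matrix (Fin 2) (Fin 2) ℝ} {B : ℝ}
    (hB : ∀ i j, |A i j| ≤ B) (v : Fin 2 → ℝ) :
    ‖A.mulVec v‖ ≤ 2 * B * ‖v‖ := by
  have hB0 : 0 ≤ B := le_trans (abs_nonneg _) (hB 0 0)
  rw [pi_norm_le_iff_of_nonneg (by positivity)]
  intro i
  have h0 : |v 0| ≤ ‖v‖ := norm_le_pi_norm v 0
  have h1 : |v 1| ≤ ‖v‖ := norm_le_pi_norm v 1
  have he : A.mulVec v i = A i 0 * v 0 + A i 1 * v 1 := by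
    simp [Matrix.mulVec, dotProduct, Fin.sum_univ_two]
  rw [he, Real.norm_eq_abs]
  calc |A i 0 * v 0 + A i 1 * v 1| ≤ |A i 0| * |v 0| + |A i 1| * |v 1| := by
        refine (abs_add_le _ _).trans ?_
        rw [abs_mul, abs_mul]
    _ ≤ B * ‖v‖ + B * ‖v‖ := by
        gcongr
        · exact hB i 0
        · exact hB i 1
    _ = 2 * B * ‖v‖ := by ring

private lemma lipschitz_mulVec {A : Matrix (Fin 2) (Fin 2) ℝ} {B : ℝ}
    (hB : ∀ i j, |A i j| ≤ B) :
    LipschitzWith (2 * B).toNNReal (fun v : Fin 2 → ℝ => A.mulVec v) := by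
  have hB0 : 0 ≤ B := le_trans (abs_nonneg _) (hB 0 0)
  apply LipschitzWith.of_dist_le_mul
  intro x y
  rw [dist_eq_norm, dist_eq_norm, ← Matrix.mulVec_sub,
    Real.coe_toNNReal _ (by positivity)]
  exact mulVec_norm_le hB _

private lemma abs_zpow' (a : ℝ) (n : ℤ) : |a ^ n| = |a| ^ n := by
  cases n with
  | ofNat m => simp [zpow_natCast, abs_pow]
  | negSucc m => simp [zpow_negSucc, abs_inv, abs_pow]

private lemma ode_unique {A : ℝ → Matrix (Fin 2) (Fin 2) ℝ} {K : NNReal}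
    (hlip : ∀ t, LipschitzWith K fun v : Fin 2 → ℝ => (A t).mulVec v)
    {f g : ℝ → Fin 2 → ℝ}
    (hf : ∀ t, HasDerivAt f ((A t).mulVec (f t)) t)
    (hg : ∀ t, HasDerivAt g ((A t).mulVec (g t)) t)
    (h0 : f 0 = g 0) : ∀ t, f t = g t := by
  intro t
  have ht : t ∈ Ioo (-(|t| + 1)) (|t| + 1) :=
    ⟨by nlinarith [neg_abs_le t, abs_nonneg t], by nlinarith [le_abs_self t]⟩
  have h0m : (0 : ℝ) ∈ Ioo (-(|t| + 1)) (|t| + 1) := by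
    constructor <;> nlinarith [abs_nonneg t]
  exact ODE_solution_unique_of_mem_Ioo (v := fun t v => (A t).mulVec v)
    (s := fun _ => Set.univ) (fun t _ => (hlip t).lipschitzOnWith)
    h0m (fun t _ => ⟨hf t, trivial⟩) (fun t _ => ⟨hg t, trivial⟩) h0 ht

theorem gap_mode_dichotomy
    (ε μ : ℝ → ℝ)
    (hεc : Continuous ε) (hμc : Continuous μ)
    (hεp : ∀ x, ε (x + 1) = ε x) (hμp : ∀ x, μ (x + 1) = μ x)
    (hεpos : ∀ x, 0 < ε x) (hμpos : ∀ x, 0 < μ x)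
    (E : ℝ)
    (Ψ : ℝ → Matrix (Fin 2) (Fin 2) ℝ)
    (hΨ0 : Ψ 0 = 1)
    (hΨ : ∀ x, ∀ i j, HasDerivAt (fun y => Ψ y i j)
      ((!![(0 : ℝ), μ x; -E * ε x, 0] * Ψ x) i j) x)
    (hgap : |(Ψ 1).trace| > 2)
    (l₁ : ℝ) (hl₁ : |l₁| < 1)
    (V₁ : Fin 2 → ℝ) (hV₁ : V₁ ≠ 0)
    (heig : (Ψ 1).mulVec V₁ = l₁ • V₁)
    (V : ℝ → Fin 2 → ℝ)
    (hV : ∀ x, HasDerivAt V ((!![(0 : ℝ), μ x; -E * ε x, 0]).mulVec (V x)) x)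
    (hV0 : V 0 ≠ 0) :
    ((∃ c : ℝ, V 0 = c • V₁) →
      Tendsto (fun x => ‖V x‖) atTop (nhds 0) ∧
      Tendsto (fun x => ‖V x‖) atBot atTop) ∧
    ((¬ ∃ c : ℝ, V 0 = c • V₁) →
      Tendsto (fun x => ‖V x‖) atTop atTop) := by
  set A : ℝ → Matrix (Fin 2) (Fin 2) ℝ := fun x => !![(0 : ℝ), μ x; -E * ε x, 0] with hA
  -- global Lipschitz constant
  obtain ⟨Bμ, hBμ0, hBμ⟩ := bdd_of_periodic hμc hμp
  obtain ⟨Bε, hBε0, hBε⟩ := bdd_of_periodic hεc hεp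
  set B : ℝ := max Bμ (|E| * Bε) with hBdef
  have hAB : ∀ x i j, |A x i j| ≤ B := by
    intro x i j
    fin_cases i <;> fin_cases j <;> simp [hA]
    · exact le_max_of_le_left (le_trans (abs_nonneg _) (hBμ 0))
    · exact le_max_of_le_left (hBμ x)
    · exact le_max_of_le_right (by gcongr; exact hBε x)
    · exact le_max_of_le_left (le_trans (abs_nonneg _) (hBμ 0))
  have hlip : ∀ t, LipschitzWith (2 * B).toNNReal
      (fun v : Fin 2 → ℝ => (A t).mulVec v) := fun t => lipschitz_mulVec (hAB t)
  -- fundamental-matrix representation of solutions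
  have hsol : ∀ (c : Fin 2 → ℝ) (x : ℝ),
      HasDerivAt (fun y => (Ψ y).mulVec c) ((A x).mulVec ((Ψ x).mulVec c)) x := by
    intro c x
    rw [Matrix.mulVec_mulVec, hasDerivAt_pi]
    intro i
    have key : (fun y => (Ψ y).mulVec c i) =
        fun y => Ψ y i 0 * c 0 + Ψ y i 1 * c 1 := by
      funext y; simp [Matrix.mulVec, dotProduct, Fin.sum_univ_two]
    have key2 : ((A x * Ψ x).mulVec c) i =
        (A x * Ψ x) i 0 * c 0 + (A x * Ψ x) i 1 * c 1 := by
      simp [Matrix.mulVec, dotProduct, Fin.sum_univ_two]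
    rw [key, key2]
    exact ((hΨ x i 0).mul_const (c 0)).add ((hΨ x i 1).mul_const (c 1))
  have hrepr : ∀ (W : ℝ → Fin 2 → ℝ),
      (∀ x, HasDerivAt W ((A x).mulVec (W x)) x) →
      ∀ x, W x = (Ψ x).mulVec (W 0) := by
    intro W hW
    refine ode_unique hlip hW (fun x => hsol (W 0) x) ?_
    rw [hΨ0, Matrix.one_mulVec]
  -- integer shifts
  have hεpI : ∀ (n : ℤ) (x : ℝ), ε (x + n) = ε x := by
    intro n x
    have hper : Function.Periodic ε 1 := hεp
    have := (hper.int_mul n) x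
    simpa using this
  have hμpI : ∀ (n : ℤ) (x : ℝ), μ (x + n) = μ x := by
    intro n x
    have hper : Function.Periodic μ 1 := hμp
    have := (hper.int_mul n) x
    simpa using this
  have hshift : ∀ (n : ℤ) (x : ℝ), V (x + n) = (Ψ x).mulVec (V (n : ℝ)) := by
    intro n x
    have hW : ∀ x : ℝ, HasDerivAt (fun y => V (y + (n : ℝ)))
        ((A x).mulVec (V (x + (n : ℝ)))) x := by
      intro x
      have hg : HasDerivAt (fun y : ℝ => y + (n : ℝ)) 1 x := (hasDerivAt_id x).add_const _
      have h := (hV (x + (n : ℝ))).scomp x hg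
      simp only [one_smul] at h
      rw [hμpI n x, hεpI n x] at h
      exact h
    have := hrepr (fun y => V (y + (n : ℝ))) hW x
    simpa using this
  have hstep : ∀ n : ℤ, V ((n : ℝ) + 1) = (Ψ 1).mulVec (V (n : ℝ)) := by
    intro n
    have := hshift n 1
    rwa [add_comm] at this
  -- determinant is 1
  have hdet : ∀ x, (Ψ x).det = 1 := by
    have hconst : ∀ x, HasDerivAt (fun y => (Ψ y).det) 0 x := by
      intro x
      have h := (((hΨ x 0 0).mul (hΨ x 1 1)).sub ((hΨ x 0 1).mul (hΨ x 1 0)))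
      have keyf : (fun y => (Ψ y).det) =
          fun y => Ψ y 0 0 * Ψ y 1 1 - Ψ y 0 1 * Ψ y 1 0 := by
        funext y; rw [Matrix.det_fin_two]
      rw [keyf]
      refine h.congr_deriv ?_
      simp [Matrix.mul_apply, Fin.sum_univ_two]
      ring
    have hd : ∀ x, (Ψ x).det = (Ψ 0).det := fun x =>
      is_const_of_deriv_eq_zero (fun y => (hconst y).differentiableAt)
        (fun y => (hconst y).deriv) x 0
    intro x
    rw [hd x, hΨ0, Matrix.det_one]
  have hl₁0 : l₁ ≠ 0 := by
    intro h
    have hinv : ∀ w : Fin 2 → ℝ, ((Ψ 1).adjugate).mulVec ((Ψ 1).mulVec w) = w := by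
      intro w
      rw [Matrix.mulVec_mulVec, Matrix.adjugate_mul, hdet 1, one_smul,
        Matrix.one_mulVec]
    have : V₁ = 0 := by
      have h2 : (Ψ 1).mulVec V₁ = 0 := by rw [heig, h, zero_smul]
      have := hinv V₁
      rw [h2, Matrix.mulVec_zero] at this
      exact this.symm
    exact hV₁ this
  have hMinj : ∀ w w' : Fin 2 → ℝ,
      (Ψ 1).mulVec w = (Ψ 1).mulVec w' → w = w' := by
    intro w w' h
    have hinv : ∀ w : Fin 2 → ℝ, ((Ψ 1).adjugate).mulVec ((Ψ 1).mulVec w) = w := by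
      intro w
      rw [Matrix.mulVec_mulVec, Matrix.adjugate_mul, hdet 1, one_smul,
        Matrix.one_mulVec]
    rw [← hinv w, h, hinv w']
  -- bounds on Ψ on [0,1]
  have hΨentc : ∀ i j, Continuous fun x => Ψ x i j := fun i j =>
    continuous_iff_continuousAt.mpr fun x => (hΨ x i j).continuousAt
  obtain ⟨C0, hC0⟩ := (isCompact_Icc (a := (0:ℝ)) (b := 1)).exists_bound_of_continuousOn
    (Continuous.continuousOn
      ((((hΨentc 0 0).abs.add (hΨentc 0 1).abs).add (hΨentc 1 0).abs).add
        (hΨentc 1 1).abs))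
  set C : ℝ := max C0 1 with hCdef
  have hC1 : (1:ℝ) ≤ C := le_max_right _ _
  have hCpos : (0:ℝ) < 2 * C := by linarith
  have hentry : ∀ r ∈ Icc (0:ℝ) 1, ∀ i j, |Ψ r i j| ≤ C := by
    intro r hr i j
    have h := hC0 r hr
    rw [Real.norm_eq_abs] at h
    have h2 : |Ψ r 0 0| + |Ψ r 0 1| + |Ψ r 1 0| + |Ψ r 1 1| ≤ C :=
      le_max_of_le_left ((le_abs_self _).trans h)
    fin_cases i <;> fin_cases j <;>
      simp only [Fin.zero_eta, Fin.mk_one, Fin.isValue] <;>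
      nlinarith [abs_nonneg (Ψ r 0 0), abs_nonneg (Ψ r 0 1), abs_nonneg (Ψ r 1 0),
        abs_nonneg (Ψ r 1 1)]
  -- mulVec bounds on [0,1]
  have hup : ∀ r ∈ Icc (0:ℝ) 1, ∀ w : Fin 2 → ℝ, ‖(Ψ r).mulVec w‖ ≤ 2 * C * ‖w‖ :=
    fun r hr w => mulVec_norm_le (hentry r hr) w
  have hdown : ∀ r ∈ Icc (0:ℝ) 1, ∀ w : Fin 2 → ℝ,
      ‖w‖ ≤ 2 * C * ‖(Ψ r).mulVec w‖ := by
    intro r hr w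
    have hinv : ((Ψ r).adjugate).mulVec ((Ψ r).mulVec w) = w := by
      rw [Matrix.mulVec_mulVec, Matrix.adjugate_mul, hdet r, one_smul,
        Matrix.one_mulVec]
    have hadj : ∀ i j, |(Ψ r).adjugate i j| ≤ C := by
      intro i j
      rw [Matrix.adjugate_fin_two]
      fin_cases i <;> fin_cases j <;> simp [abs_neg] <;> exact hentry r hr _ _
    calc ‖w‖ = ‖((Ψ r).adjugate).mulVec ((Ψ r).mulVec w)‖ := by rw [hinv]
      _ ≤ 2 * C * ‖(Ψ r).mulVec w‖ := mulVec_norm_le hadj _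
  have hfr_mem : ∀ x : ℝ, Int.fract x ∈ Icc (0:ℝ) 1 := fun x =>
    ⟨Int.fract_nonneg x, (Int.fract_lt_one x).le⟩
  have hfract : ∀ x : ℝ, V x = (Ψ (Int.fract x)).mulVec (V ((⌊x⌋ : ℤ) : ℝ)) := by
    intro x
    have := hshift ⌊x⌋ (Int.fract x)
    rwa [Int.fract_add_floor] at this
  have hVup : ∀ x : ℝ, ‖V x‖ ≤ 2 * C * ‖V ((⌊x⌋ : ℤ) : ℝ)‖ := by
    intro x
    rw [hfract x]
    exact hup _ (hfr_mem x) _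
  have hVdown : ∀ x : ℝ, ‖V ((⌊x⌋ : ℤ) : ℝ)‖ ≤ 2 * C * ‖V x‖ := by
    intro x
    have := hdown _ (hfr_mem x) (V ((⌊x⌋ : ℤ) : ℝ))
    rwa [← hfract x] at this
  have hfloorNat : Tendsto (fun x : ℝ => ⌊x⌋.toNat) atTop atTop := by
    rw [tendsto_atTop_atTop]
    intro b
    refine ⟨(b : ℝ), fun a ha => ?_⟩
    have h1 : (b : ℤ) ≤ ⌊a⌋ := Int.le_floor.mpr (by exact_mod_cast ha)
    calc b = ((b : ℤ)).toNat := by simp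
      _ ≤ ⌊a⌋.toNat := Int.toNat_le_toNat h1
  have habs : (0:ℝ) < |l₁| := abs_pos.mpr hl₁0
  have hq : 1 < |l₁|⁻¹ := (one_lt_inv₀ habs).mpr hl₁
  constructor
  · -- case (i)
    rintro ⟨c, hc⟩
    have hc0 : c ≠ 0 := by
      rintro rfl
      rw [zero_smul] at hc
      exact hV0 hc
    have hVn : ∀ n : ℤ, V ((n : ℤ) : ℝ) = (c * l₁ ^ n) • V₁ := by
      intro n
      induction n using Int.induction_on with
      | zero => simpa using hc
      | succ k ih =>
        have h1 := hstep (k : ℤ)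
        rw [ih, Matrix.mulVec_smul, heig, smul_smul] at h1
        push_cast at h1 ⊢
        rw [h1]
        congr 1
        rw [zpow_add_one₀ hl₁0]
        ring
      | pred k ih =>
        have h1 := hstep (-(k : ℤ) - 1)
        have harg : ((-(k : ℤ) - 1 : ℤ) : ℝ) + 1 = ((-(k : ℤ) : ℤ) : ℝ) := by
          push_cast; ring
        rw [harg, ih] at h1
        have h2 : (Ψ 1).mulVec ((c * l₁ ^ (-(k : ℤ) - 1)) • V₁) =
            (c * l₁ ^ (-(k : ℤ))) • V₁ := by
          rw [Matrix.mulVec_smul, heig, smul_smul]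
          congr 1
          rw [show (-(k : ℤ)) = (-(k : ℤ) - 1) + 1 by ring, zpow_add_one₀ hl₁0]
          ring
        exact (hMinj _ _ (h2.trans h1)).symm
    have hVnorm : ∀ n : ℤ, ‖V ((n : ℤ) : ℝ)‖ = (|c| * ‖V₁‖) * |l₁| ^ n := by
      intro n
      rw [hVn n, norm_smul, Real.norm_eq_abs, abs_mul, abs_zpow' l₁]
      ring
    constructor
    · -- decay at +∞
      apply squeeze_zero_norm' (a := fun x => (2 * C * (|c| * ‖V₁‖)) * |l₁| ^ (⌊x⌋.toNat))
      · filter_upwards [eventually_ge_atTop (0:ℝ)] with x hx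
        have hfl : (0:ℤ) ≤ ⌊x⌋ := Int.floor_nonneg.mpr hx
        rw [norm_norm]
        calc ‖V x‖ ≤ 2 * C * ‖V ((⌊x⌋ : ℤ) : ℝ)‖ := hVup x
          _ = 2 * C * ((|c| * ‖V₁‖) * |l₁| ^ (⌊x⌋ : ℤ)) := by rw [hVnorm]
          _ = (2 * C * (|c| * ‖V₁‖)) * |l₁| ^ (⌊x⌋.toNat) := by
              have hzp : |l₁| ^ (⌊x⌋ : ℤ) = |l₁| ^ (⌊x⌋.toNat) := by
                conv_lhs => rw [← Int.toNat_of_nonneg hfl]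
                exact zpow_natCast _ _
              rw [hzp]
              ring
      · have hlim : Tendsto (fun n : ℕ => |l₁| ^ n) atTop (nhds 0) :=
          tendsto_pow_atTop_nhds_zero_of_lt_one (abs_nonneg l₁) hl₁
        have h2 := (hlim.comp hfloorNat).const_mul (2 * C * (|c| * ‖V₁‖))
        simpa using h2
    · -- blow-up at −∞
      have hmB : Tendsto (fun x : ℝ => (-⌊x⌋).toNat) atBot atTop := by
        rw [tendsto_atTop]
        intro b
        filter_upwards [eventually_le_atBot ((Int.cast (-(b:ℤ)) : ℝ))] with x hx
        have h1 : ⌊x⌋ ≤ -(b:ℤ) := by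
          have := Int.floor_le_floor hx
          rwa [Int.floor_intCast] at this
        have h2 : (b : ℤ) ≤ -⌊x⌋ := by linarith
        calc b = ((b : ℤ)).toNat := by simp
          _ ≤ (-⌊x⌋).toNat := Int.toNat_le_toNat h2
      have hKpos : (0:ℝ) < (|c| * ‖V₁‖) / (2 * C) := by
        have : (0:ℝ) < |c| := abs_pos.mpr hc0
        have : (0:ℝ) < ‖V₁‖ := norm_pos_iff.mpr hV₁
        positivity
      apply tendsto_atTop_mono' atBot
        (f₁ := fun x => ((|c| * ‖V₁‖) / (2 * C)) * (|l₁|⁻¹) ^ ((-⌊x⌋).toNat))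
      · filter_upwards [eventually_le_atBot (0:ℝ)] with x hx
        have hfl : ⌊x⌋ ≤ 0 := Int.floor_nonpos hx
        have hcast : ((((-⌊x⌋).toNat : ℕ) : ℤ)) = -⌊x⌋ := Int.toNat_of_nonneg (by linarith)
        have hzp : (|l₁|⁻¹) ^ ((-⌊x⌋).toNat) = |l₁| ^ (⌊x⌋ : ℤ) := by
          rw [inv_pow, ← zpow_natCast |l₁| ((-⌊x⌋).toNat), ← _root_.zpow_neg, hcast, neg_neg]
        have h1 := hVdown x
        rw [hVnorm, ← hzp] at h1
        rw [div_mul_eq_mul_div, div_le_iff₀ hCpos]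
        linarith
      · exact ((tendsto_pow_atTop_atTop_of_one_lt hq).comp hmB).const_mul_atTop hKpos
  · -- case (ii)
    intro hnc
    set D : (Fin 2 → ℝ) → (Fin 2 → ℝ) → ℝ := fun u v => u 0 * v 1 - u 1 * v 0 with hD
    have hD0 : D V₁ (V 0) ≠ 0 := by
      intro h
      apply hnc
      have h' : V₁ 0 * V 0 1 - V₁ 1 * V 0 0 = 0 := h
      by_cases h1 : V₁ 0 = 0
      · have h2 : V₁ 1 ≠ 0 := by
          intro h2
          apply hV₁
          funext i
          fin_cases i <;> simp [h1, h2]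
        have hV00 : V 0 0 = 0 := by
          rw [h1] at h'
          have : V₁ 1 * V 0 0 = 0 := by linarith
          exact (mul_eq_zero.mp this).resolve_left h2
        refine ⟨V 0 1 / V₁ 1, ?_⟩
        funext i
        fin_cases i <;> simp only [Fin.zero_eta, Fin.mk_one, Fin.isValue, Pi.smul_apply,
          smul_eq_mul]
        · rw [hV00, h1, mul_zero]
        · field_simp
      · refine ⟨V 0 0 / V₁ 0, ?_⟩
        funext i
        fin_cases i <;> simp only [Fin.zero_eta, Fin.mk_one, Fin.isValue, Pi.smul_apply,
          smul_eq_mul]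
        · field_simp
        · field_simp
          nlinarith [h']
    have hkey : ∀ w : Fin 2 → ℝ, D V₁ ((Ψ 1).mulVec w) = l₁⁻¹ * D V₁ w := by
      intro w
      have h2 : D ((Ψ 1).mulVec V₁) ((Ψ 1).mulVec w) = (Ψ 1).det * D V₁ w := by
        simp only [hD, Matrix.mulVec, dotProduct, Fin.sum_univ_two,
          Matrix.det_fin_two]
        ring
      rw [heig, hdet 1, one_mul] at h2
      have h3 : l₁ * D V₁ ((Ψ 1).mulVec w) = D V₁ w := by
        rw [← h2]
        simp only [hD, Pi.smul_apply, smul_eq_mul]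
        ring
      rw [eq_comm, inv_mul_eq_iff_eq_mul₀ hl₁0]
      exact h3.symm
    have hDn : ∀ n : ℕ, D V₁ (V ((n : ℕ) : ℝ)) = (l₁⁻¹) ^ n * D V₁ (V 0) := by
      intro n
      induction n with
      | zero => simp
      | succ k ih =>
        have h1 := hstep (k : ℤ)
        have harg : ((k : ℤ) : ℝ) + 1 = (((k+1 : ℕ) : ℕ) : ℝ) := by push_cast; ring
        rw [harg] at h1
        rw [h1, hkey, show ((k : ℤ) : ℝ) = ((k : ℕ) : ℝ) by push_cast; ring, ih, pow_succ]
        ring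
    have hDle : ∀ w : Fin 2 → ℝ, |D V₁ w| ≤ 2 * ‖V₁‖ * ‖w‖ := by
      intro w
      have h0 : |V₁ 0| ≤ ‖V₁‖ := norm_le_pi_norm V₁ 0
      have h1 : |V₁ 1| ≤ ‖V₁‖ := norm_le_pi_norm V₁ 1
      have h2 : |w 0| ≤ ‖w‖ := norm_le_pi_norm w 0
      have h3 : |w 1| ≤ ‖w‖ := norm_le_pi_norm w 1
      calc |D V₁ w| ≤ |V₁ 0 * w 1| + |V₁ 1 * w 0| := abs_sub _ _
        _ = |V₁ 0| * |w 1| + |V₁ 1| * |w 0| := by rw [abs_mul, abs_mul]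
        _ ≤ ‖V₁‖ * ‖w‖ + ‖V₁‖ * ‖w‖ :=
            add_le_add (mul_le_mul h0 h3 (abs_nonneg _) (norm_nonneg _))
              (mul_le_mul h1 h2 (abs_nonneg _) (norm_nonneg _))
        _ = 2 * ‖V₁‖ * ‖w‖ := by ring
    have hV₁pos : (0:ℝ) < ‖V₁‖ := norm_pos_iff.mpr hV₁
    have hDabs : (0:ℝ) < |D V₁ (V 0)| := abs_pos.mpr hD0
    have hlow : ∀ n : ℕ,
        (|D V₁ (V 0)| / (2 * ‖V₁‖)) * (|l₁|⁻¹) ^ n ≤ ‖V ((n : ℕ) : ℝ)‖ := by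
      intro n
      have h1 := hDle (V ((n : ℕ) : ℝ))
      rw [hDn n, abs_mul, abs_pow, abs_inv] at h1
      rw [div_mul_eq_mul_div, div_le_iff₀ (by positivity)]
      nlinarith [h1]
    apply tendsto_atTop_mono' atTop
      (f₁ := fun x => ((|D V₁ (V 0)| / (2 * ‖V₁‖)) / (2 * C)) * (|l₁|⁻¹) ^ (⌊x⌋.toNat))
    · filter_upwards [eventually_ge_atTop (0:ℝ)] with x hx
      have hfl : (0:ℤ) ≤ ⌊x⌋ := Int.floor_nonneg.mpr hx
      have hcast : ((⌊x⌋.toNat : ℕ) : ℝ) = ((⌊x⌋ : ℤ) : ℝ) := by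
        exact_mod_cast congrArg (fun z : ℤ => (z : ℝ)) (Int.toNat_of_nonneg hfl)
      have h1 := hVdown x
      have h2 := hlow ⌊x⌋.toNat
      rw [hcast] at h2
      rw [div_div, div_mul_eq_mul_div, div_le_iff₀ (by positivity)]
      calc |D V₁ (V 0)| * (|l₁|⁻¹) ^ (⌊x⌋.toNat)
          = (|D V₁ (V 0)| / (2 * ‖V₁‖)) * (|l₁|⁻¹) ^ (⌊x⌋.toNat) * (2 * ‖V₁‖) := by
            field_simp
        _ ≤ ‖V ((⌊x⌋ : ℤ) : ℝ)‖ * (2 * ‖V₁‖) := by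
            have := h2
            gcongr
        _ ≤ (2 * C * ‖V x‖) * (2 * ‖V₁‖) := by gcongr
        _ = ‖V x‖ * (2 * ‖V₁‖ * (2 * C)) := by ring
    · refine ((tendsto_pow_atTop_atTop_of_one_lt hq).comp hfloorNat).const_mul_atTop ?_
      positivity
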